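/- For every natural number K ≥ 1 and every real α with 0 < α ≤ 1, the sum ∑_{k=1}^{K} (1/k) · C(K,k) · α^k · (1-α)^{K-k} is at most 2/(K·α). -/

import Mathlib

theorem binomial_truncated_reciprocal_sum_le (K : ℕ) (hK : 1 ≤ K) (α : ℝ)
    (hα : 0 < α) (hα1 : α ≤ 1) :
    ∑ k ∈ Finset.Icc 1 K,
        (1 / (k : ℝ)) * (K.choose k : ℝ) * α ^ k * (1 - α) ^ (K - k) ≤ 2 / (K * α) := by
  have h1α : (0:ℝ) ≤ 1 - α := by linarith
  have hKpos : (0:ℝ) < K := by exact_mod_cast hK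
  have hK1 : (0:ℝ) < (K:ℝ) + 1 := by linarith
  -- termwise bound
  have key : ∀ k ∈ Finset.Icc 1 K,
      (1 / (k : ℝ)) * (K.choose k : ℝ) * α ^ k * (1 - α) ^ (K - k) ≤
      (2 / (((K:ℝ)+1) * α)) *
        (((K+1).choose (k+1) : ℝ) * α ^ (k+1) * (1 - α) ^ ((K+1) - (k+1))) := by
    intro k hk
    simp only [Finset.mem_Icc] at hk
    obtain ⟨hk1, hkK⟩ := hk
    have hkpos : (0:ℝ) < k := by exact_mod_cast hk1
    have hid : ((K:ℝ)+1) * (K.choose k : ℝ) = ((K+1).choose (k+1) : ℝ) * ((k:ℝ)+1) := by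
      have := Nat.add_one_mul_choose_eq K k
      exact_mod_cast congrArg (Nat.cast : ℕ → ℝ) this
    have hsub : (K+1) - (k+1) = K - k := by omega
    rw [hsub]
    have hpow : α ^ (k+1) = α * α ^ k := by ring
    rw [hpow]
    have hcoef : (1 / (k : ℝ)) * (K.choose k : ℝ) ≤
        (2 / (((K:ℝ)+1) * α)) * (((K+1).choose (k+1) : ℝ) * α) := by
      rw [div_mul_eq_mul_div, one_mul, div_mul_eq_mul_div]
      rw [div_le_div_iff₀ hkpos (by positivity)]
      have h2k : (k:ℝ) + 1 ≤ 2 * k := by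
        have : (1:ℝ) ≤ k := by exact_mod_cast hk1
        linarith
      have hch : (0:ℝ) ≤ ((K+1).choose (k+1) : ℝ) := by positivity
      calc (K.choose k : ℝ) * (((K:ℝ)+1) * α)
          = (((K:ℝ)+1) * (K.choose k : ℝ)) * α := by ring
        _ = ((K+1).choose (k+1) : ℝ) * ((k:ℝ)+1) * α := by rw [hid]
        _ ≤ ((K+1).choose (k+1) : ℝ) * (2 * k) * α := by
            apply mul_le_mul_of_nonneg_right _ hα.le
            exact mul_le_mul_of_nonneg_left h2k hch
        _ = 2 * (((K+1).choose (k+1) : ℝ) * α) * (k:ℝ) := by ring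
    have hnn : (0:ℝ) ≤ α ^ k * (1 - α) ^ (K - k) := by positivity
    calc (1 / (k : ℝ)) * (K.choose k : ℝ) * α ^ k * (1 - α) ^ (K - k)
        = ((1 / (k : ℝ)) * (K.choose k : ℝ)) * (α ^ k * (1 - α) ^ (K - k)) := by ring
      _ ≤ ((2 / (((K:ℝ)+1) * α)) * (((K+1).choose (k+1) : ℝ) * α)) *
            (α ^ k * (1 - α) ^ (K - k)) := mul_le_mul_of_nonneg_right hcoef hnn
      _ = (2 / (((K:ℝ)+1) * α)) *
            (((K+1).choose (k+1) : ℝ) * (α * α ^ k) * (1 - α) ^ (K - k)) := by ring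
  refine le_trans (Finset.sum_le_sum key) ?_
  rw [← Finset.mul_sum]
  have hsum : ∑ k ∈ Finset.Icc 1 K,
      (((K+1).choose (k+1) : ℝ) * α ^ (k+1) * (1 - α) ^ ((K+1) - (k+1))) ≤ 1 := by
    have hre : ∑ k ∈ Finset.Icc 1 K,
        (((K+1).choose (k+1) : ℝ) * α ^ (k+1) * (1 - α) ^ ((K+1) - (k+1)))
        = ∑ j ∈ Finset.Icc 2 (K+1),
        (((K+1).choose j : ℝ) * α ^ j * (1 - α) ^ ((K+1) - j)) := by
      apply Finset.sum_nbij' (fun k => k + 1) (fun j => j - 1) <;>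
        intro a ha <;> simp only [Finset.mem_Icc] at * <;> first | omega |
        (congr 1 <;> [skip; omega] <;> congr 1 <;> omega)
    rw [hre]
    have hfull : ∑ j ∈ Finset.range (K+2),
        (((K+1).choose j : ℝ) * α ^ j * (1 - α) ^ ((K+1) - j)) = 1 := by
      have h := add_pow α (1 - α) (K+1)
      have heq : ∑ j ∈ Finset.range (K+2),
          (((K+1).choose j : ℝ) * α ^ j * (1 - α) ^ ((K+1) - j)) = (α + (1 - α))^(K+1) := by
        rw [h]
        apply Finset.sum_congr rfl
        intro j _
        ring
      rw [heq]
      norm_num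
    calc ∑ j ∈ Finset.Icc 2 (K+1), (((K+1).choose j : ℝ) * α ^ j * (1 - α) ^ ((K+1) - j))
        ≤ ∑ j ∈ Finset.range (K+2), (((K+1).choose j : ℝ) * α ^ j * (1 - α) ^ ((K+1) - j)) := by
          apply Finset.sum_le_sum_of_subset_of_nonneg
          · intro x hx
            simp only [Finset.mem_Icc, Finset.mem_range] at *
            omega
          · intro j _ _
            positivity
      _ = 1 := hfull
  calc (2 / (((K:ℝ)+1) * α)) * ∑ k ∈ Finset.Icc 1 K,
        (((K+1).choose (k+1) : ℝ) * α ^ (k+1) * (1 - α) ^ ((K+1) - (k+1)))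
      ≤ (2 / (((K:ℝ)+1) * α)) * 1 := by
        apply mul_le_mul_of_nonneg_left hsum (by positivity)
    _ = 2 / (((K:ℝ)+1) * α) := mul_one _
    _ ≤ 2 / ((K:ℝ) * α) := by
        apply div_le_div_of_nonneg_left (by norm_num) (by positivity)
        apply mul_le_mul_of_nonneg_right (by linarith) hα.le
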